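/- Let C = (C_0, C_1, ..., C_k) be a tuple of real n×n matrices. Then C has the column W-property if and only if C has both the cS-W property and the column ND-W property. -/

import Mathlib

open Matrix Finset

/-- `R` is a column representative matrix of the tuple `C = (C 0, ..., C k)`:
each column of `R` is the corresponding column of some `C i`. -/
def IsColRep {n k : ℕ} (C : Fin (k+1) → Matrix (Fin n) (Fin n) ℝ)
    (R : Matrix (Fin n) (Fin n) ℝ) : Prop :=
  ∀ j : Fin n, ∃ i : Fin (k+1), ∀ r : Fin n, R r j = C i r j

/-- The column `W`-property: all column representative matrices have determinants
that are all positive or all negative. -/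
def HasColumnW {n k : ℕ} (C : Fin (k+1) → Matrix (Fin n) (Fin n) ℝ) : Prop :=
  (∀ R, IsColRep C R → 0 < R.det) ∨ (∀ R, IsColRep C R → R.det < 0)

/-- The column `W₀`-property: determinants of all column representative matrices are
all nonnegative with at least one positive, or all nonpositive with at least one negative. -/
def HasColumnW0 {n k : ℕ} (C : Fin (k+1) → Matrix (Fin n) (Fin n) ℝ) : Prop :=
  ((∀ R, IsColRep C R → 0 ≤ R.det) ∧ (∃ R, IsColRep C R ∧ 0 < R.det)) ∨
  ((∀ R, IsColRep C R → R.det ≤ 0) ∧ (∃ R, IsColRep C R ∧ R.det < 0))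

/-- The column nondegenerate-`W` (column ND-`W`) property. -/
def HasColumnNDW {n k : ℕ} (C : Fin (k+1) → Matrix (Fin n) (Fin n) ℝ) : Prop :=
  ∀ x : Fin (k+1) → Fin n → ℝ,
    C 0 *ᵥ x 0 = ∑ i : Fin k, C i.succ *ᵥ x i.succ →
    (∀ i j : Fin (k+1), i < j → x i * x j = 0) →
    ∀ i, x i = 0

/-- The column sufficient-`W` (cS-`W`) property. -/
def HasCSW {n k : ℕ} (C : Fin (k+1) → Matrix (Fin n) (Fin n) ℝ) : Prop :=
  ∀ x : Fin (k+1) → Fin n → ℝ,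
    C 0 *ᵥ x 0 = ∑ i : Fin k, C i.succ *ᵥ x i.succ →
    (∀ i : Fin k, x 0 * x i.succ ≤ 0) →
    (∀ i j : Fin k, i < j → 0 ≤ x i.succ * x j.succ) →
    ∀ i : Fin k, x i.castSucc * x i.succ = 0

/-- The cone column sufficient-`W` (cone cS-`W`) property. -/
def HasConeCSW {n k : ℕ} (C : Fin (k+1) → Matrix (Fin n) (Fin n) ℝ) : Prop :=
  ∀ x : Fin (k+1) → Fin n → ℝ,
    C 0 *ᵥ x 0 = ∑ i : Fin k, C i.succ *ᵥ x i.succ →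
    (∀ i : Fin k, 0 ≤ x i.succ) →
    (∀ i : Fin k, x 0 * x i.succ ≤ 0) →
    ∀ i : Fin k, x i.castSucc * x i.succ = 0

/-- `x = (x 0, ..., x k)` solves the extended horizontal linear complementarity
problem EHLCP(C, d, q). -/
def IsSolEHLCP {n k : ℕ} (C : Fin (k+1) → Matrix (Fin n) (Fin n) ℝ)
    (d : Fin (k-1) → Fin n → ℝ) (q : Fin n → ℝ)
    (x : Fin (k+1) → Fin n → ℝ) : Prop :=
  C 0 *ᵥ x 0 = q + ∑ i : Fin k, C i.succ *ᵥ x i.succ ∧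
  x 0 ⊓ x 1 = 0 ∧
  ∀ j : Fin (k-1),
    (d j - x ⟨j.1 + 1, by have := j.2; omega⟩) ⊓ x ⟨j.1 + 2, by have := j.2; omega⟩ = 0

namespace ColWAux

variable {n k : ℕ}

/-- The representative matrix determined by a choice function `f`. -/
def Rep (C : Fin (k+1) → Matrix (Fin n) (Fin n) ℝ) (f : Fin n → Fin (k+1)) :
    Matrix (Fin n) (Fin n) ℝ := Matrix.of fun r j => C (f j) r j

lemma rep_isColRep (C : Fin (k+1) → Matrix (Fin n) (Fin n) ℝ) (f : Fin n → Fin (k+1)) :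
    IsColRep C (Rep C f) := fun j => ⟨f j, fun _ => rfl⟩

lemma exists_rep (C : Fin (k+1) → Matrix (Fin n) (Fin n) ℝ) {R : Matrix (Fin n) (Fin n) ℝ}
    (h : IsColRep C R) : ∃ f, R = Rep C f := by
  choose f hf using h
  exact ⟨f, by ext r j; exact hf j r⟩

/-- The mixture matrix built from weights `lam`. -/
def Mix (C : Fin (k+1) → Matrix (Fin n) (Fin n) ℝ) (lam : Fin (k+1) → Fin n → ℝ) :
    Matrix (Fin n) (Fin n) ℝ := Matrix.of fun r j => ∑ i, lam i j * C i r j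

/-- The signed vectors built from weights and a kernel vector. -/
def XX (lam : Fin (k+1) → Fin n → ℝ) (z : Fin n → ℝ) : Fin (k+1) → Fin n → ℝ :=
  fun i j => (if i = 0 then 1 else -1) * lam i j * z j

lemma xx_eq (C : Fin (k+1) → Matrix (Fin n) (Fin n) ℝ) (lam : Fin (k+1) → Fin n → ℝ)
    (z : Fin n → ℝ) (hz : Mix C lam *ᵥ z = 0) :
    C 0 *ᵥ (XX lam z 0) = ∑ i : Fin k, C i.succ *ᵥ (XX lam z i.succ) := by
  unfold XX Mix at *
  funext r
  have h := congrFun hz r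
  simp only [Matrix.mulVec, dotProduct, Matrix.of_apply, Pi.zero_apply,
    Finset.sum_apply, if_true, if_false, eq_self_iff_true, Fin.succ_ne_zero] at h ⊢
  simp only [Finset.sum_mul] at h
  rw [Finset.sum_comm] at h
  rw [Fin.sum_univ_succ] at h
  have e1 : ∑ x, C 0 r x * (1 * lam 0 x * z x) = ∑ x, lam 0 x * C 0 r x * z x :=
    Finset.sum_congr rfl (fun _ _ => by ring)
  have e2 : ∀ i : Fin k, ∑ x, C i.succ r x * (-1 * lam i.succ x * z x)
      = -∑ x, lam i.succ x * C i.succ r x * z x := fun i => by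
    rw [← Finset.sum_neg_distrib]; exact Finset.sum_congr rfl (fun _ _ => by ring)
  rw [e1, Finset.sum_congr rfl (fun i _ => e2 i), Finset.sum_neg_distrib]
  linarith

lemma xx_sign1 (lam : Fin (k+1) → Fin n → ℝ) (z : Fin n → ℝ) (h : ∀ i j, 0 ≤ lam i j)
    (i : Fin k) : XX lam z 0 * XX lam z i.succ ≤ 0 := by
  intro j
  simp only [XX, Pi.mul_apply, Pi.zero_apply, if_true, eq_self_iff_true,
    Fin.succ_ne_zero, if_false]
  nlinarith [h 0 j, h i.succ j, sq_nonneg (z j), mul_nonneg (h 0 j) (h i.succ j)]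

lemma xx_sign2 (lam : Fin (k+1) → Fin n → ℝ) (z : Fin n → ℝ) (h : ∀ i j, 0 ≤ lam i j)
    (i j : Fin k) : 0 ≤ XX lam z i.succ * XX lam z j.succ := by
  intro r
  simp only [XX, Pi.mul_apply, Pi.zero_apply, Fin.succ_ne_zero, if_false]
  nlinarith [sq_nonneg (z r), mul_nonneg (h i.succ r) (h j.succ r)]

/-- Multilinearity: a nonnegative column mixture of the `C i` with a positive weight in
each column has determinant of the same sign as all representatives. -/
lemma det_mix (C : Fin (k+1) → Matrix (Fin n) (Fin n) ℝ) (ε : ℝ)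
    (hrep : ∀ f : Fin n → Fin (k+1), 0 < ε * (Rep C f).det)
    (lam : Fin (k+1) → Fin n → ℝ) (h0 : ∀ i j, 0 ≤ lam i j)
    (h1 : ∀ j, ∃ i, 0 < lam i j) :
    0 < ε * (Mix C lam).det := by
  unfold Mix Rep at *
  have key : (Matrix.of fun r j => ∑ i, lam i j * C i r j).det
      = ∑ f : Fin n → Fin (k+1), (∏ j, lam (f j) j) * (Matrix.of fun r j => C (f j) r j).det := by
    rw [← Matrix.det_transpose]
    have h2 : (Matrix.of fun r j => ∑ i, lam i j * C i r j)ᵀ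
        = fun j => ∑ i : Fin (k+1), lam i j • (fun r => C i r j) := by
      funext j r
      simp [Matrix.transpose_apply, Finset.sum_apply]
    have hms := (Matrix.detRowAlternating (R := ℝ) (n := Fin n)).toMultilinearMap.map_sum
      (α := fun _ : Fin n => Fin (k+1)) (g := fun j i => lam i j • fun r => C i r j)
    show Matrix.detRowAlternating _ = _
    rw [h2]
    refine hms.trans ?_
    refine Finset.sum_congr rfl fun f _ => ?_
    rw [MultilinearMap.map_smul_univ, smul_eq_mul]
    congr 1
    rw [← Matrix.det_transpose (Matrix.of fun r j => C (f j) r j)]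
    rfl
  rw [key, Finset.mul_sum]
  refine Finset.sum_pos' (fun f _ => ?_) ?_
  · have := hrep f
    have hp : 0 ≤ ∏ j, lam (f j) j := Finset.prod_nonneg fun j _ => h0 _ _
    nlinarith
  · refine ⟨fun j => Classical.choose (h1 j), Finset.mem_univ _, ?_⟩
    have hp : 0 < ∏ j, lam (Classical.choose (h1 j)) j :=
      Finset.prod_pos fun j _ => Classical.choose_spec (h1 j)
    have := hrep fun j => Classical.choose (h1 j)
    nlinarith

/-- The strong sign-implication property. -/
def Zprop (C : Fin (k+1) → Matrix (Fin n) (Fin n) ℝ) : Prop :=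
  ∀ x : Fin (k+1) → Fin n → ℝ,
    C 0 *ᵥ x 0 = ∑ i : Fin k, C i.succ *ᵥ x i.succ →
    (∀ i : Fin k, x 0 * x i.succ ≤ 0) →
    (∀ i j : Fin k, i < j → 0 ≤ x i.succ * x j.succ) →
    ∀ i, x i = 0

lemma zprop_of_w (C : Fin (k+1) → Matrix (Fin n) (Fin n) ℝ) (ε : ℝ)
    (hrep : ∀ f : Fin n → Fin (k+1), 0 < ε * (Rep C f).det) : Zprop C := by
  intro x heq h1 h2
  classical
  set z : Fin n → ℝ := fun j => x 0 j - ∑ i : Fin k, x i.succ j with hzdef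
  have h1' : ∀ (i : Fin k) j, x 0 j * x i.succ j ≤ 0 := fun i j => h1 i j
  have hpair : ∀ (a b : Fin k) j, 0 ≤ x a.succ j * x b.succ j := by
    intro a b j
    rcases lt_trichotomy a b with h | h | h
    · exact h2 a b h j
    · subst h; exact mul_self_nonneg _
    · have := h2 b a h j; simpa [mul_comm] using this
  have hz0 : ∀ j, 0 ≤ z j * x 0 j := by
    intro j
    have he : z j * x 0 j = x 0 j ^ 2 - (∑ i : Fin k, x i.succ j) * x 0 j := by
      simp only [hzdef]; ring
    rw [Finset.sum_mul] at he
    have hs : ∑ i : Fin k, x i.succ j * x 0 j ≤ 0 :=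
      Finset.sum_nonpos fun i _ => by have := h1' i j; nlinarith
    nlinarith [sq_nonneg (x 0 j)]
  have hzi : ∀ (i : Fin k) j, z j * x i.succ j ≤ 0 := by
    intro i j
    have he : z j * x i.succ j
        = x 0 j * x i.succ j - ∑ l : Fin k, x l.succ j * x i.succ j := by
      simp only [hzdef, sub_mul, ← Finset.sum_mul]
    have hs : 0 ≤ ∑ l : Fin k, x l.succ j * x i.succ j :=
      Finset.sum_nonneg fun l _ => hpair l i j
    have := h1' i j
    linarith [he ▸ (by linarith : x 0 j * x i.succ j - ∑ l : Fin k, x l.succ j * x i.succ j ≤ 0)]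
  have hzzero : ∀ j, z j = 0 → x 0 j = 0 ∧ ∀ i : Fin k, x i.succ j = 0 := by
    intro j hj
    have hxs : x 0 j = ∑ i : Fin k, x i.succ j := by
      have := congrArg (· + ∑ i : Fin k, x i.succ j) hj
      simpa [hzdef, sub_add_cancel] using this
    have h0 : x 0 j = 0 := by
      have : x 0 j * x 0 j = ∑ i : Fin k, x 0 j * x i.succ j := by
        rw [← Finset.mul_sum, ← hxs]
      nlinarith [Finset.sum_nonpos (fun i (_ : i ∈ Finset.univ) => h1' i j), mul_self_nonneg (x 0 j)]
    refine ⟨h0, fun i => ?_⟩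
    have hsum : ∑ l : Fin k, x l.succ j = 0 := by rw [← hxs, h0]
    have hle : x i.succ j * x i.succ j ≤ ∑ l : Fin k, x i.succ j * x l.succ j :=
      Finset.single_le_sum (f := fun l => x i.succ j * x l.succ j)
        (fun l _ => hpair i l j) (Finset.mem_univ i)
    have : ∑ l : Fin k, x i.succ j * x l.succ j = 0 := by
      rw [← Finset.mul_sum, hsum, mul_zero]
    nlinarith [mul_self_nonneg (x i.succ j)]
  -- the weights
  set lam : Fin (k+1) → Fin n → ℝ := fun i j =>
    if z j = 0 then (if i = 0 then 1 else 0)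
    else (if i = 0 then x 0 j / z j else -(x i j) / z j) with hlamdef
  have hlam0 : ∀ i j, 0 ≤ lam i j := by
    intro i j
    simp only [hlamdef]
    split_ifs with hzj hi hi
    · norm_num
    · norm_num
    · have : x 0 j / z j = z j * x 0 j / (z j * z j) := by
        rw [mul_div_mul_left _ _ hzj]
      rw [this]
      exact div_nonneg (hz0 j) (mul_self_nonneg _)
    · obtain ⟨l, rfl⟩ := Fin.eq_succ_of_ne_zero hi
      have : -(x l.succ j) / z j = -(z j * x l.succ j) / (z j * z j) := by
        rw [neg_div, neg_div, mul_div_mul_left _ _ hzj]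
      rw [this]
      exact div_nonneg (by linarith [hzi l j]) (mul_self_nonneg _)
  have hlamsum : ∀ j, ∑ i, lam i j = 1 := by
    intro j
    by_cases hzj : z j = 0
    · simp [hlamdef, hzj, Fin.sum_univ_succ, Fin.succ_ne_zero]
    · simp only [hlamdef, if_neg hzj, Fin.sum_univ_succ, if_pos rfl, Fin.succ_ne_zero, if_neg,
        reduceIte]
      rw [← Finset.sum_div, ← add_div]
      rw [show x 0 j + ∑ i : Fin k, -x i.succ j = z j by simp [hzdef]; ring]
      exact div_self hzj
  have hlam1 : ∀ j, ∃ i, 0 < lam i j := by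
    intro j
    by_contra hcon
    push_neg at hcon
    have : ∑ i, lam i j ≤ 0 := Finset.sum_nonpos fun i _ => hcon i
    rw [hlamsum j] at this; linarith
  have hmv : (Matrix.of fun r j => ∑ i, lam i j * C i r j) *ᵥ z = 0 := by
    funext r
    have hterm : ∀ j, (∑ i, lam i j * C i r j) * z j
        = x 0 j * C 0 r j - ∑ l : Fin k, x l.succ j * C l.succ r j := by
      intro j
      by_cases hzj : z j = 0
      · obtain ⟨hx0, hxi⟩ := hzzero j hzj
        simp [hzj, hx0, hxi]
      · rw [Finset.sum_mul, Fin.sum_univ_succ]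
        simp only [hlamdef, if_neg hzj, if_pos rfl, Fin.succ_ne_zero, if_neg, reduceIte]
        rw [show x 0 j / z j * C 0 r j * z j = x 0 j * C 0 r j * (z j / z j) by ring,
          div_self hzj, mul_one]
        congr 1
        rw [← Finset.sum_neg_distrib]
        refine Finset.sum_congr rfl fun l _ => ?_
        rw [show -x l.succ j / z j * C l.succ r j * z j
            = -(x l.succ j * C l.succ r j) * (z j / z j) by ring, div_self hzj, mul_one]
    simp only [Matrix.mulVec, dotProduct, Matrix.of_apply, Pi.zero_apply]
    rw [Finset.sum_congr rfl fun j _ => hterm j, Finset.sum_sub_distrib]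
    rw [Finset.sum_comm]
    have := congrFun heq r
    simp only [Matrix.mulVec, dotProduct, Finset.sum_apply] at this
    have e1 : ∑ j, x 0 j * C 0 r j = ∑ j, C 0 r j * x 0 j :=
      Finset.sum_congr rfl fun j _ => mul_comm _ _
    have e2 : ∀ y : Fin k, ∑ j, x y.succ j * C y.succ r j = ∑ j, C y.succ r j * x y.succ j :=
      fun y => Finset.sum_congr rfl fun j _ => mul_comm _ _
    rw [e1, Finset.sum_congr rfl fun y _ => e2 y, ← this, sub_self]
  have hdet : 0 < ε * (Matrix.of fun r j => ∑ i, lam i j * C i r j).det :=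
    det_mix C ε hrep lam hlam0 hlam1
  have hzall : z = 0 := by
    by_contra hz
    have hd0 : (Matrix.of fun r j => ∑ i, lam i j * C i r j).det = 0 :=
      Matrix.exists_mulVec_eq_zero_iff.mp ⟨z, hz, hmv⟩
    rw [hd0, mul_zero] at hdet
    exact lt_irrefl 0 hdet
  intro i
  funext j
  obtain ⟨ha, hb⟩ := hzzero j (congrFun hzall j)
  refine Fin.cases ?_ ?_ i
  · exact ha
  · exact hb


/-- ND-W implies all representatives are nonsingular. -/
lemma rep_det_ne_zero (C : Fin (k+1) → Matrix (Fin n) (Fin n) ℝ) (hN : HasColumnNDW C)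
    (f : Fin n → Fin (k+1)) : (Rep C f).det ≠ 0 := by
  classical
  intro hdet
  obtain ⟨z, hz, hmv⟩ := Matrix.exists_mulVec_eq_zero_iff.mpr hdet
  set lam : Fin (k+1) → Fin n → ℝ := fun i j => if i = f j then 1 else 0 with hlamdef
  have hmix : Mix C lam = Rep C f := by
    ext r j
    simp [Mix, Rep, hlamdef, Finset.sum_ite_eq', ite_mul]
  have hmv' : Mix C lam *ᵥ z = 0 := by rw [hmix]; exact hmv
  have heq := xx_eq C lam z hmv'
  have hpz : ∀ a b : Fin (k+1), a < b → XX lam z a * XX lam z b = 0 := by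
    intro a b hab
    funext j
    simp only [XX, Pi.mul_apply, Pi.zero_apply, hlamdef]
    by_cases ha : a = f j
    · have hb : b ≠ f j := fun h => (ne_of_lt hab) (ha.trans h.symm)
      simp [hb]
    · simp [ha]
  have hall := hN (XX lam z) heq hpz
  apply hz
  funext j
  have := congrFun (hall (f j)) j
  simp only [XX, hlamdef, if_pos rfl, Pi.zero_apply] at this
  rcases eq_or_ne (f j) 0 with h | h <;> simp [h] at this <;> simpa using this


/-- One elementary move (raising one column's index by one) preserves the sign of det. -/
lemma step (C : Fin (k+1) → Matrix (Fin n) (Fin n) ℝ) (hS : HasCSW C) (hN : HasColumnNDW C)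
    (f : Fin n → Fin (k+1)) (j0 : Fin n) (hj : (f j0).1 + 1 < k + 1) :
    0 < (Rep C f).det * (Rep C (Function.update f j0 ⟨(f j0).1 + 1, hj⟩)).det := by
  classical
  set i1 : Fin (k+1) := f j0 with hi1def
  set i2 : Fin (k+1) := ⟨(f j0).1 + 1, hj⟩ with hi2def
  have hne12 : i2 ≠ i1 := by simp [hi1def, hi2def, Fin.ext_iff]
  set f' := Function.update f j0 i2 with hf'
  have hd1 := rep_det_ne_zero C hN f
  have hd2 := rep_det_ne_zero C hN f'
  rcases (mul_ne_zero hd1 hd2).lt_or_gt with hlt | hpos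
  swap
  · exact hpos
  exfalso
  set lam : ℝ → Fin (k+1) → Fin n → ℝ := fun t i j =>
    if j = j0 then (if i = i1 then 1 - t else if i = i2 then t else 0)
    else (if i = f j then 1 else 0) with hlam
  set g : ℝ → ℝ := fun t => (Mix C (lam t)).det with hg
  have hmixentry : ∀ t r j, Mix C (lam t) r j =
      if j = j0 then (1 - t) * C i1 r j + t * C i2 r j else C (f j) r j := by
    intro t r j
    simp only [Mix, Matrix.of_apply, hlam]
    by_cases hjj : j = j0
    · simp only [hjj, eq_self_iff_true, if_true]
      rw [Finset.sum_congr rfl (fun i (_ : i ∈ Finset.univ) =>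
        show (if i = i1 then 1 - t else if i = i2 then t else 0) * C i r j0
          = (if i = i1 then (1-t) * C i1 r j0 else 0)
            + (if i = i2 then t * C i2 r j0 else 0) by
        by_cases h1 : i = i1
        · subst h1; simp [Ne.symm hne12]
        · by_cases h2 : i = i2 <;> simp [h1, h2, hne12])]
      rw [Finset.sum_add_distrib, Finset.sum_ite_eq' Finset.univ i1,
        Finset.sum_ite_eq' Finset.univ i2]
      simp
    · simp only [if_neg hjj]
      rw [Finset.sum_congr rfl (fun i (_ : i ∈ Finset.univ) =>
        show (if i = f j then (1:ℝ) else 0) * C i r j = (if i = f j then C (f j) r j else 0) by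
        by_cases h1 : i = f j <;> simp [h1])]
      rw [Finset.sum_ite_eq' Finset.univ (f j)]
      simp
  have hmix0 : g 0 = (Rep C f).det := by
    have hM : Mix C (lam 0) = Rep C f := by
      ext r j
      rw [hmixentry]
      by_cases hjj : j = j0 <;> simp [hjj, Rep, hi1def]
    simp only [hg, hM]
  have hmix1 : g 1 = (Rep C f').det := by
    have hM : Mix C (lam 1) = Rep C f' := by
      ext r j
      rw [hmixentry]
      by_cases hjj : j = j0 <;> simp [hjj, Rep, hf', Function.update_apply]
    simp only [hg, hM]
  have hgcont : Continuous g := by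
    apply Continuous.matrix_det
    apply continuous_matrix
    intro r j
    simp only [hmixentry]
    by_cases hjj : j = j0 <;> simp only [hjj, if_pos rfl, if_neg, reduceIte] <;> fun_prop
  have hiv : ∃ t ∈ Set.Icc (0:ℝ) 1, g t = 0 := by
    rcases mul_neg_iff.mp (by rw [← hmix0, ← hmix1] at hlt; exact hlt) with ⟨hpos0, hneg1⟩ | ⟨hneg0, hpos1⟩
    · have := intermediate_value_Icc' (by norm_num : (0:ℝ) ≤ 1) hgcont.continuousOn
      obtain ⟨t, ht, hgt⟩ := this ⟨le_of_lt hneg1, le_of_lt hpos0⟩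
      exact ⟨t, ht, hgt⟩
    · have := intermediate_value_Icc (by norm_num : (0:ℝ) ≤ 1) hgcont.continuousOn
      obtain ⟨t, ht, hgt⟩ := this ⟨le_of_lt hneg0, le_of_lt hpos1⟩
      exact ⟨t, ht, hgt⟩
  obtain ⟨t, ⟨ht0, ht1⟩, hgt⟩ := hiv
  have ht0' : 0 < t := by
    rcases ht0.lt_or_eq with h | h
    · exact h
    · exact absurd (hmix0.symm.trans (h ▸ hgt)) hd1
  have ht1' : t < 1 := by
    rcases ht1.lt_or_eq with h | h
    · exact h
    · exact absurd (hmix1.symm.trans (h ▸ hgt)) hd2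
  obtain ⟨z, hz, hmv⟩ := Matrix.exists_mulVec_eq_zero_iff.mpr hgt
  have hlamnn : ∀ i j, 0 ≤ lam t i j := by
    intro i j
    simp only [hlam]
    split_ifs <;> linarith
  have heq := xx_eq C (lam t) z hmv
  have hcons := hS (XX (lam t) z) heq (xx_sign1 (lam t) z hlamnn)
    (fun i j _ => xx_sign2 (lam t) z hlamnn i j)
  set m : Fin k := ⟨i1.1, by omega⟩ with hm
  have hmc : m.castSucc = i1 := by simp [hm, Fin.ext_iff]
  have hms : m.succ = i2 := by simp [hm, hi2def, Fin.ext_iff]; rfl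
  have hlami1 : lam t i1 j0 = 1 - t := by simp [hlam]
  have hlami2 : lam t i2 j0 = t := by simp [hlam, hne12]
  have hj0z : z j0 = 0 := by
    have hc := congrFun (hcons m) j0
    rw [Pi.mul_apply] at hc
    simp only [XX, hmc, hms, hlami1, hlami2, Pi.zero_apply] at hc
    have hi2ne : i2 ≠ 0 := by rw [hi2def]; intro h; have := congrArg Fin.val h; simp at this
    rw [if_neg hi2ne] at hc
    have hzz : (1 - t) * t * (z j0 * z j0) = 0 := by
      by_cases hi1' : i1 = 0
      · rw [if_pos hi1'] at hc; linear_combination -hc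
      · rw [if_neg hi1'] at hc; linear_combination hc
    have h1t : (1 - t) * t ≠ 0 := ne_of_gt (by nlinarith)
    have := mul_eq_zero.mp hzz
    rcases this with h | h
    · exact absurd h h1t
    · exact mul_self_eq_zero.mp h
  have hpz : ∀ a b : Fin (k+1), a < b → XX (lam t) z a * XX (lam t) z b = 0 := by
    intro a b hab
    funext j
    rw [Pi.mul_apply]
    by_cases hjj : j = j0
    · subst hjj; simp [XX, hj0z]
    · simp only [XX, hlam, if_neg hjj, Pi.zero_apply]
      by_cases ha : a = f j
      · have hb : b ≠ f j := fun h => (ne_of_lt hab) (ha.trans h.symm)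
        simp [hb]
      · simp [ha]
  have hall := hN (XX (lam t) z) heq hpz
  apply hz
  funext j
  by_cases hjj : j = j0
  · rw [hjj, hj0z]; rfl
  · have := congrFun (hall (f j)) j
    simp only [XX, hlam, if_neg hjj, if_pos rfl, Pi.zero_apply] at this
    rcases eq_or_ne (f j) 0 with h | h <;> simp [h] at this <;> simpa using this

lemma chain (C : Fin (k+1) → Matrix (Fin n) (Fin n) ℝ) (hS : HasCSW C) (hN : HasColumnNDW C) :
    ∀ m : ℕ, ∀ f : Fin n → Fin (k+1), (∑ j, (f j).1) = m →
    0 < (Rep C f).det * (Rep C (fun _ => (0 : Fin (k+1)))).det := by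
  intro m
  induction m using Nat.strong_induction_on with
  | _ m ih =>
    intro f hm
    by_cases h : ∀ j, f j = 0
    · have hf : f = fun _ => (0 : Fin (k+1)) := funext h
      rw [hf]
      exact mul_self_pos.mpr (rep_det_ne_zero C hN _)
    · push_neg at h
      obtain ⟨j0, hj0⟩ := h
      have hv : (f j0).1 ≠ 0 := fun hc => hj0 (Fin.ext hc)
      have hvlt : (f j0).1 - 1 + 1 < k + 1 := by have := (f j0).2; omega
      set fm := Function.update f j0 ⟨(f j0).1 - 1, by omega⟩ with hfm
      have hfmj0 : fm j0 = ⟨(f j0).1 - 1, by omega⟩ := by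
        rw [hfm, Function.update_self]
      have hjm : (fm j0).1 + 1 < k + 1 := by rw [hfmj0]; exact hvlt
      have hupd : Function.update fm j0 ⟨(fm j0).1 + 1, hjm⟩ = f := by
        funext j
        by_cases hjj : j = j0
        · subst hjj
          rw [Function.update_self]
          apply Fin.ext
          simp only [hfmj0]
          omega
        · rw [Function.update_of_ne hjj, hfm, Function.update_of_ne hjj]
      have hstep := step C hS hN fm j0 hjm
      rw [hupd] at hstep
      have hmsum : ∑ j, (fm j).1 = m - 1 := by
        have e : ∀ j, (fm j).1
            = Function.update (fun j => (f j).1) j0 ((f j0).1 - 1) j := by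
          intro j
          by_cases hjj : j = j0 <;> simp [hfm, hjj, Function.update_apply]
        rw [Finset.sum_congr rfl fun j _ => e j,
          Finset.sum_update_of_mem (Finset.mem_univ j0), ← hm,
          ← Finset.add_sum_erase Finset.univ (fun j => (f j).1) (Finset.mem_univ j0)]
        have hfv : 1 ≤ (f j0).1 := Nat.one_le_iff_ne_zero.mpr hv
        simp only [Finset.sdiff_singleton_eq_erase]
        omega
      have hm1 : 1 ≤ m := hm ▸ le_trans (Nat.one_le_iff_ne_zero.mpr hv)
        (Finset.single_le_sum (f := fun j => (f j).1)
          (fun j _ => Nat.zero_le _) (Finset.mem_univ j0))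
      have hih := ih (m - 1) (by omega) fm hmsum
      have hsq : 0 < (Rep C fm).det * (Rep C fm).det :=
        mul_self_pos.mpr (rep_det_ne_zero C hN fm)
      nlinarith [mul_pos hstep hih]

end ColWAux

open ColWAux in
/-- `C` has the column `W`-property iff `C` has both the cS-`W` property
and the column ND-`W` property. -/
theorem columnW_iff_csW_and_columnNDW {n k : ℕ}
    (C : Fin (k+1) → Matrix (Fin n) (Fin n) ℝ) :
    HasColumnW C ↔ HasCSW C ∧ HasColumnNDW C := by
  constructor
  · intro hW
    have hZ : Zprop C := by
      rcases hW with h | h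
      · exact zprop_of_w C 1 (fun f => by simpa using h _ (rep_isColRep C f))
      · exact zprop_of_w C (-1) (fun f => by
          have := h _ (rep_isColRep C f); nlinarith)
    constructor
    · intro x h1 h2 h3 i
      have := hZ x h1 h2 h3
      simp [this]
    · intro x h1 h2 i
      refine hZ x h1 (fun i => le_of_eq (h2 0 i.succ (Fin.succ_pos i))) (fun i j hij => ?_) i
      exact le_of_eq (h2 i.succ j.succ (by simpa using hij)).symm
  · rintro ⟨hS, hN⟩
    have key : ∀ f : Fin n → Fin (k+1),
        0 < (Rep C f).det * (Rep C (fun _ => (0 : Fin (k+1)))).det :=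
      fun f => chain C hS hN _ f rfl
    rcases lt_or_gt_of_ne (rep_det_ne_zero C hN (fun _ => (0 : Fin (k+1)))) with h0 | h0
    · right
      intro R hR
      obtain ⟨f, rfl⟩ := exists_rep C hR
      nlinarith [key f]
    · left
      intro R hR
      obtain ⟨f, rfl⟩ := exists_rep C hR
      nlinarith [key f]
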